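/- arXiv:1204.5393 — 5 statements merged into one kernel-verified Lean document; each statement's English description precedes it below -/
import Mathlib

section
/- If M is a primitive d×d matrix with nonnegative integer entries, then there exists k ≤ d² − 2d + 2 such that all entries of M^k are strictly positive. -/
namespace WielandtAux

variable {d : ℕ} {M : Matrix (Fin d) (Fin d) ℕ}

/-- Composition of positive entries of powers. -/
lemma pow_add_pos_iff (M : Matrix (Fin d) (Fin d) ℕ) (a b : ℕ) (i j : Fin d) :
    0 < (M ^ (a + b)) i j ↔ ∃ t, 0 < (M ^ a) i t ∧ 0 < (M ^ b) t j := by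
  rw [pow_add, Matrix.mul_apply]
  constructor
  · intro h
    by_contra hc
    push_neg at hc
    have : ∀ t ∈ Finset.univ, (M ^ a) i t * (M ^ b) t j = 0 := by
      intro t _
      rcases Nat.eq_zero_or_pos ((M ^ a) i t) with h1 | h1
      · simp [h1]
      · have h2 : (M ^ b) t j = 0 := by
          have := hc t h1; omega
        simp [h2]
    rw [Finset.sum_eq_zero this] at h
    exact absurd h (lt_irrefl 0)
  · rintro ⟨t, h1, h2⟩
    have : 0 < (M ^ a) i t * (M ^ b) t j := Nat.mul_pos h1 h2
    calc 0 < (M ^ a) i t * (M ^ b) t j := this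
      _ ≤ ∑ t, (M ^ a) i t * (M ^ b) t j :=
        Finset.single_le_sum (f := fun t => (M ^ a) i t * (M ^ b) t j) (fun t _ => Nat.zero_le _) (Finset.mem_univ t)

/-- Positive entry of a power iff a walk exists. -/
lemma pos_iff_walk (M : Matrix (Fin d) (Fin d) ℕ) (m : ℕ) (i j : Fin d) :
    0 < (M ^ m) i j ↔
      ∃ w : ℕ → Fin d, w 0 = i ∧ w m = j ∧ ∀ t < m, 0 < M (w t) (w (t + 1)) := by
  induction m generalizing j with
  | zero =>
    simp only [pow_zero]
    constructor
    · intro h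
      have hij : i = j := by
        by_contra hne
        rw [Matrix.one_apply_ne hne] at h
        exact absurd h (lt_irrefl 0)
      exact ⟨fun _ => i, rfl, hij ▸ rfl, fun t ht => absurd ht (Nat.not_lt_zero t)⟩
    · rintro ⟨w, h0, hm, _⟩
      have : i = j := h0 ▸ hm
      rw [this, Matrix.one_apply_eq]
      exact Nat.one_pos
  | succ m ih =>
    constructor
    · intro h
      rw [show m + 1 = m + 1 from rfl, pow_add_pos_iff M m 1 i j] at h
      obtain ⟨t, h1, h2⟩ := h
      rw [pow_one] at h2
      obtain ⟨w, h0, hm, hw⟩ := (ih t).mp h1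
      refine ⟨fun u => if u ≤ m then w u else j, by simp [h0], by simp, ?_⟩
      intro u hu
      rcases Nat.lt_or_ge u m with h' | h'
      · simp only [if_pos (Nat.le_of_lt h'), if_pos (Nat.succ_le_of_lt h')]
        exact hw u h'
      · have hum : u = m := by omega
        subst hum
        simp only [if_pos (le_refl u), if_neg (by omega : ¬ u + 1 ≤ u)]
        rw [hm]
        exact h2
    · rintro ⟨w, h0, hm, hw⟩
      rw [pow_add_pos_iff M m 1 i j]
      refine ⟨w m, (ih (w m)).mpr ⟨w, h0, rfl, fun t ht => hw t (by omega)⟩, ?_⟩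
      rw [pow_one, ← hm]
      exact hw m (by omega)


/-- Cutting a repeated vertex out of a walk. -/
lemma cut (M : Matrix (Fin d) (Fin d) ℕ) (w : ℕ → Fin d) (m a b : ℕ)
    (hab : a < b) (hbm : b ≤ m) (heq : w a = w b)
    (hw : ∀ t < m, 0 < M (w t) (w (t + 1))) :
    ∃ w' : ℕ → Fin d, w' 0 = w 0 ∧ w' (m - (b - a)) = w m ∧
      ∀ t < m - (b - a), 0 < M (w' t) (w' (t + 1)) := by
  refine ⟨fun t => if t ≤ a then w t else w (t + (b - a)), by simp, ?_, ?_⟩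
  · by_cases h : m - (b - a) ≤ a
    · have h1 : m - (b - a) = a := by omega
      have h2 : m = b := by omega
      simp only [if_pos h]
      rw [h1, heq, h2]
    · simp only [if_neg h]
      congr 1
      omega
  · intro t ht
    rcases Nat.lt_trichotomy t a with h' | h' | h'
    · simp only [if_pos (Nat.le_of_lt h'), if_pos (Nat.succ_le_of_lt h')]
      exact hw t (by omega)
    · subst h'
      simp only [if_pos (le_refl t), if_neg (by omega : ¬ t + 1 ≤ t)]
      have e : t + 1 + (b - t) = b + 1 := by omega
      rw [e, heq]
      exact hw b (by omega)
    · simp only [if_neg (by omega : ¬ t ≤ a), if_neg (by omega : ¬ t + 1 ≤ a)]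
      have e : t + 1 + (b - a) = t + (b - a) + 1 := by omega
      rw [e]
      exact hw (t + (b - a)) (by omega)

/-- A positive entry of some power gives one with small exponent. -/
lemma exists_short (M : Matrix (Fin d) (Fin d) ℕ) (m : ℕ) (i j : Fin d)
    (h : 0 < (M ^ m) i j) : ∃ m' ≤ d - 1, 0 < (M ^ m') i j := by
  induction m using Nat.strong_induction_on with
  | _ m ih =>
    rcases le_or_gt m (d - 1) with hm | hm
    · exact ⟨m, hm, h⟩
    · have hd : 0 < d := Fin.pos i
      have hdm : d < m + 1 := by omega
      obtain ⟨w, h0, hme, hw⟩ := (pos_iff_walk M m i j).mp h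
      obtain ⟨x, y, hxy, hxyeq⟩ :=
        Fintype.exists_ne_map_eq_of_card_lt (fun t : Fin (m + 1) => w t.val)
          (by simpa using hdm)
      rcases Nat.lt_or_ge x.val y.val with hlt | hge
      · obtain ⟨w', h0', hm', hw'⟩ := cut M w m x.val y.val hlt (by omega) hxyeq hw
        have hpos : 0 < (M ^ (m - (y.val - x.val))) i j := by
          rw [pos_iff_walk]
          exact ⟨w', h0.symm ▸ h0', hme ▸ hm', hw'⟩
        exact ih (m - (y.val - x.val)) (by omega) hpos
      · have hlt : y.val < x.val := by
          rcases Nat.lt_or_ge y.val x.val with h' | h'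
          · exact h'
          · exact absurd (Fin.ext (by omega)) hxy
        obtain ⟨w', h0', hm', hw'⟩ := cut M w m y.val x.val hlt (by omega) hxyeq.symm hw
        have hpos : 0 < (M ^ (m - (x.val - y.val))) i j := by
          rw [pos_iff_walk]
          exact ⟨w', h0.symm ▸ h0', hme ▸ hm', hw'⟩
        exact ih (m - (x.val - y.val)) (by omega) hpos

/-- A loop can be iterated. -/
lemma loop_pow (M : Matrix (Fin d) (Fin d) ℕ) (u : Fin d) (h : 0 < M u u) :
    ∀ k, 0 < (M ^ k) u u := by
  intro k
  induction k with
  | zero => simp [Matrix.one_apply_eq]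
  | succ k ih =>
    rw [pow_add_pos_iff M k 1]
    exact ⟨u, ih, by rwa [pow_one]⟩

/-- Powers of an all-positive matrix are positive (d ≥ 1). -/
lemma all_pos_pow (M : Matrix (Fin d) (Fin d) ℕ) (h : ∀ i j, 0 < M i j) :
    ∀ k, 1 ≤ k → ∀ i j, 0 < (M ^ k) i j := by
  intro k
  induction k with
  | zero => omega
  | succ k ih =>
    intro _ i j
    rcases Nat.eq_zero_or_pos k with hk | hk
    · subst hk; rw [pow_one]; exact h i j
    · rw [pow_add_pos_iff M k 1]
      exact ⟨j, ih hk i j, by rw [pow_one]; exact h j j⟩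


/-- Segment of a walk. -/
lemma segment (M : Matrix (Fin d) (Fin d) ℕ) (w : ℕ → Fin d) (m : ℕ)
    (hw : ∀ t < m, 0 < M (w t) (w (t + 1))) (a b : ℕ) (hab : a ≤ b) (hbm : b ≤ m) :
    0 < (M ^ (b - a)) (w a) (w b) := by
  rw [pos_iff_walk]
  refine ⟨fun t => w (a + t), by simp, ?_, ?_⟩
  · show w (a + (b - a)) = w b
    congr 1
    omega
  · intro t ht
    show 0 < M (w (a + t)) (w (a + (t + 1)))
    have e : a + (t + 1) = (a + t) + 1 := by omega
    rw [e]
    exact hw (a + t) (by omega)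

end WielandtAux


/-- A square matrix with nonnegative entries is primitive if some power has all
entries strictly positive. Lemma 2.4 (Horn–Johnson): for a primitive `d × d`
matrix, some power `k ≤ d² - 2d + 2` already has all entries strictly positive. -/
theorem primitive_pow_pos_of_le (d : ℕ) (M : Matrix (Fin d) (Fin d) ℕ)
    (hprim : ∃ n : ℕ, ∀ i j, 0 < (M ^ n) i j) :
    ∃ k ≤ d ^ 2 - 2 * d + 2, ∀ i j, 0 < (M ^ k) i j := by
  open WielandtAux in
  classical
  obtain ⟨n, hn⟩ := hprim
  rcases lt_or_ge d 2 with hd | hd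
  · refine ⟨0, by omega, ?_⟩
    intro i j
    have hd1 : d = 1 := by have := Fin.pos i; omega
    have hij : i = j := by subst hd1; exact Subsingleton.elim i j
    rw [pow_zero, hij, Matrix.one_apply_eq]
    exact Nat.one_pos
  · have hd0 : 0 < d := by omega
    have v0 : Fin d := ⟨0, hd0⟩
    have hn1 : 1 ≤ n := by
      by_contra h
      have hn0 : n = 0 := by omega
      have h2 := hn ⟨0, by omega⟩ ⟨1, by omega⟩
      rw [hn0, pow_zero, Matrix.one_apply_ne (by simp [Fin.ext_iff])] at h2
      exact absurd h2 (lt_irrefl 0)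
    have hP : ∃ t, 1 ≤ t ∧ ∃ v, 0 < (M ^ t) v v := ⟨n, hn1, v0, hn v0 v0⟩
    set s := Nat.find hP with hs_def
    obtain ⟨hs1, v, hv⟩ := Nat.find_spec hP
    have hmin : ∀ t, 1 ≤ t → t < s → ∀ u : Fin d, ¬ 0 < (M ^ t) u u := by
      intro t h1 h2 u hu
      exact Nat.find_min hP h2 ⟨h1, u, hu⟩
    have hsn : s ≤ n := Nat.find_le ⟨hn1, v0, hn v0 v0⟩
    obtain ⟨w, hw0, hws, hw⟩ := (pos_iff_walk M s v v).mp hv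
    have hnorep : ∀ a b, a < b → b ≤ s → b - a < s → w a ≠ w b := by
      intro a b hab hbs hbas heq
      have hseg := segment M w s hw a b (le_of_lt hab) hbs
      rw [← heq] at hseg
      exact hmin (b - a) (by omega) hbas (w a) hseg
    have hsd : s ≤ d := by
      by_contra h
      push_neg at h
      obtain ⟨x, y, hxy, hxyeq⟩ := Fintype.exists_ne_map_eq_of_card_lt
        (fun t : Fin s => w t.val) (by simpa using h)
      rcases Nat.lt_trichotomy x.val y.val with h' | h' | h'
      · exact hnorep x.val y.val h' (by omega) (by omega) hxyeq
      · exact absurd (Fin.ext h') hxy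
      · exact hnorep y.val x.val h' (by omega) (by omega) hxyeq.symm
    -- cycle vertices have loops of length s
    have hSw : ∀ a < s, 0 < (M ^ s) (w a) (w a) := by
      intro a ha
      have h1 := segment M w s hw a s (le_of_lt ha) (le_refl s)
      have h2 := segment M w s hw 0 a (Nat.zero_le a) (le_of_lt ha)
      rw [hws, ← hw0] at h1
      rw [Nat.sub_zero] at h2
      have h3 := (pow_add_pos_iff M (s - a) a (w a) (w a)).mpr ⟨w 0, h1, h2⟩
      rwa [show s - a + a = s by omega] at h3
    -- from a loop vertex, reach a loop vertex in any number of steps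
    have hrot : ∀ u : Fin d, 0 < (M ^ s) u u →
        ∀ e, ∃ u', 0 < (M ^ e) u u' ∧ 0 < (M ^ s) u' u' := by
      intro u hu e
      induction e using Nat.strong_induction_on with
      | _ e ih =>
        rcases le_or_gt e s with hes | hes
        · have h1 : 0 < (M ^ (e + (s - e))) u u := by
            rwa [show e + (s - e) = s by omega]
          obtain ⟨t, ht1, ht2⟩ := (pow_add_pos_iff M e (s - e) u u).mp h1
          have h2 := (pow_add_pos_iff M (s - e) e t t).mpr ⟨u, ht2, ht1⟩
          rw [show s - e + e = s by omega] at h2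
          exact ⟨t, ht1, h2⟩
        · obtain ⟨u', h1, h2⟩ := ih (e - s) (by omega)
          have h3 := (pow_add_pos_iff M s (e - s) u u').mpr ⟨u, hu, h1⟩
          rw [show s + (e - s) = e by omega] at h3
          exact ⟨u', h3, h2⟩
    -- s ≤ d - 1 : otherwise M is supported on a full cycle, contradicting primitivity
    have hsd1 : s ≤ d - 1 := by
      by_contra h
      have hsd' : s = d := by omega
      have hinj : ∀ a b, a < d → b < d → w a = w b → a = b := by
        intro a b ha hb heq
        rcases Nat.lt_trichotomy a b with h' | h' | h'
        · exact absurd heq (hnorep a b h' (by omega) (by omega))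
        · exact h'
        · exact absurd heq.symm (hnorep b a h' (by omega) (by omega))
      have hsurj : ∀ j : Fin d, ∃ a, a < d ∧ w a = j := by
        have hinj' : Function.Injective (fun t : Fin d => w t.val) := by
          intro x y hxy
          exact Fin.ext (hinj x.val y.val x.isLt y.isLt hxy)
        have hs2 : Function.Surjective (fun t : Fin d => w t.val) :=
          Finite.surjective_of_injective hinj'
        intro j
        obtain ⟨t, ht⟩ := hs2 j
        exact ⟨t.val, t.isLt, ht⟩
      have hedge : ∀ a, a < d → ∀ j, 0 < M (w a) j → j = w ((a + 1) % d) := by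
        intro a ha j hj
        obtain ⟨b, hb, hbj⟩ := hsurj j
        subst hbj
        rcases Nat.lt_trichotomy a b with h' | h' | h'
        · have r1 := segment M w s hw b s (by omega) (le_refl s)
          have r2 := segment M w s hw 0 a (Nat.zero_le a) (by omega)
          rw [hws, ← hw0] at r1
          rw [Nat.sub_zero] at r2
          have r3 := (pow_add_pos_iff M (s - b) a (w b) (w a)).mpr ⟨w 0, r1, r2⟩
          have r4 := (pow_add_pos_iff M 1 (s - b + a) (w a) (w a)).mpr
            ⟨w b, by rwa [pow_one], r3⟩
          have hge : ¬ (1 + (s - b + a) < s) := fun hlt =>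
            hmin _ (by omega) hlt (w a) r4
          have hb1 : b = a + 1 := by omega
          rw [hb1, Nat.mod_eq_of_lt (by omega)]
        · exfalso
          rw [← h'] at hj
          have r : 0 < (M ^ 1) (w a) (w a) := by rwa [pow_one]
          exact hmin 1 le_rfl (by omega) (w a) r
        · have r2 := segment M w s hw b a (le_of_lt h') (by omega)
          have r4 := (pow_add_pos_iff M 1 (a - b) (w a) (w a)).mpr
            ⟨w b, by rwa [pow_one], r2⟩
          have hge : ¬ (1 + (a - b) < s) := fun hlt =>
            hmin _ (by omega) hlt (w a) r4
          have hb1 : b = 0 ∧ a = d - 1 := by omega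
          rw [hb1.1, show a + 1 = d by omega, Nat.mod_self]
      have hpow : ∀ m a, a < d → ∀ j, 0 < (M ^ m) (w a) j → j = w ((a + m) % d) := by
        intro m
        induction m with
        | zero =>
          intro a ha j hj
          rw [pow_zero] at hj
          have : w a = j := by
            by_contra hne
            rw [Matrix.one_apply_ne hne] at hj
            exact absurd hj (lt_irrefl 0)
          rw [← this, Nat.add_zero, Nat.mod_eq_of_lt ha]
        | succ m ih =>
          intro a ha j hj
          obtain ⟨t, h1, h2⟩ := (pow_add_pos_iff M m 1 _ _).mp hj
          rw [pow_one] at h2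
          have ht := ih a ha t h1
          rw [ht] at h2
          have hj2 := hedge ((a + m) % d) (Nat.mod_lt _ hd0) j h2
          rw [hj2, Nat.mod_add_mod, Nat.add_assoc]
      have e0 := hpow n 0 hd0 (w 0) (hn (w 0) (w 0))
      have e1 := hpow n 0 hd0 (w 1) (hn (w 0) (w 1))
      exact hnorep 0 1 Nat.zero_lt_one (by omega) (by omega) (e0.trans e1.symm)
    -- the loop-vertex set has at least s elements
    set S : Finset (Fin d) := Finset.univ.filter (fun u => 0 < (M ^ s) u u) with hS
    have hScard : s ≤ S.card := by
      have hmaps : ∀ x ∈ (Finset.univ : Finset (Fin s)), w x.val ∈ S := by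
        intro x _
        simp only [hS, Finset.mem_filter, Finset.mem_univ, true_and]
        exact hSw x.val x.isLt
      have hinjS : Set.InjOn (fun t : Fin s => w t.val) (Finset.univ : Finset (Fin s)) := by
        intro x _ y _ hxy
        by_contra hne
        rcases Nat.lt_trichotomy x.val y.val with h' | h' | h'
        · exact hnorep x.val y.val h' (by omega) (by omega) hxy
        · exact hne (Fin.ext h')
        · exact hnorep y.val x.val h' (by omega) (by omega) hxy.symm
      calc s = (Finset.univ : Finset (Fin s)).card := by simp
        _ ≤ S.card := Finset.card_le_card_of_injOn _ hmaps hinjS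
    -- from any vertex, reach a loop vertex in exactly d - s steps
    have hstep : ∀ i : Fin d, ∃ u, 0 < (M ^ (d - s)) i u ∧ 0 < (M ^ s) u u := by
      intro i
      have hex : ∃ l, ∃ u, 0 < (M ^ l) i u ∧ 0 < (M ^ s) u u := ⟨n, v, hn i v, hv⟩
      obtain ⟨u, hu1, hu2⟩ := Nat.find_spec hex
      set l := Nat.find hex with hl
      have hlmin : ∀ t < l, ∀ u' : Fin d, 0 < (M ^ t) i u' → ¬ 0 < (M ^ s) u' u' := by
        intro t ht u' h1 h2
        exact Nat.find_min hex ht ⟨u', h1, h2⟩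
      have hlds : l ≤ d - s := by
        by_contra hcon
        push_neg at hcon
        obtain ⟨w2, hw20, hw2l, hw2⟩ := (pos_iff_walk M l i u).mp hu1
        have hnotS : ∀ t < l, ¬ w2 t ∈ S := by
          intro t ht hmem
          simp only [hS, Finset.mem_filter, Finset.mem_univ, true_and] at hmem
          refine hlmin t ht (w2 t) ?_ hmem
          rw [pos_iff_walk]
          exact ⟨w2, hw20, rfl, fun r hr => hw2 r (by omega)⟩
        have hd2 : ∀ a b, a < b → b < l → w2 a ≠ w2 b := by
          intro a b hab hbl heq
          obtain ⟨w', h0', hm', hw'⟩ := cut M w2 l a b hab (by omega) heq hw2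
          have hsh : 0 < (M ^ (l - (b - a))) i u := by
            rw [pos_iff_walk]
            refine ⟨w', ?_, ?_, hw'⟩
            · rw [h0', hw20]
            · rw [hm', hw2l]
          exact hlmin _ (by omega) u hsh hu2
        have hmaps : ∀ x ∈ (Finset.univ : Finset (Fin l)), w2 x.val ∈ Sᶜ := by
          intro x _
          rw [Finset.mem_compl]
          exact hnotS x.val x.isLt
        have hinj2 : Set.InjOn (fun t : Fin l => w2 t.val)
            (Finset.univ : Finset (Fin l)) := by
          intro x _ y _ hxy
          by_contra hne
          rcases Nat.lt_trichotomy x.val y.val with h' | h' | h'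
          · exact hd2 x.val y.val h' y.isLt hxy
          · exact hne (Fin.ext h')
          · exact hd2 y.val x.val h' x.isLt hxy.symm
        have hcard2 : l ≤ Sᶜ.card := by
          calc l = (Finset.univ : Finset (Fin l)).card := by simp
            _ ≤ Sᶜ.card := Finset.card_le_card_of_injOn _ hmaps hinj2
        rw [Finset.card_compl] at hcard2
        simp only [Fintype.card_fin] at hcard2
        omega
      obtain ⟨u', h1, h2⟩ := hrot u hu2 (d - s - l)
      have h3 := (pow_add_pos_iff M l (d - s - l) i u').mpr ⟨u, hu1, h1⟩
      rw [show l + (d - s - l) = d - s by omega] at h3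
      exact ⟨u', h3, h2⟩
    -- from a loop vertex, reach everything in exactly s * (d - 1) steps
    have hfinal : ∀ u : Fin d, 0 < (M ^ s) u u → ∀ j, 0 < (M ^ (s * (d - 1))) u j := by
      intro u hu j
      have hBn : 0 < ((M ^ s) ^ n) u j := by
        rw [← pow_mul, Nat.mul_comm, pow_mul]
        exact all_pos_pow (M ^ n) hn s hs1 u j
      obtain ⟨m', hm', hpos⟩ := exists_short (M ^ s) n u j hBn
      have hloop := loop_pow (M ^ s) u hu (d - 1 - m')
      have h3 := (pow_add_pos_iff (M ^ s) (d - 1 - m') m' u j).mpr ⟨u, hloop, hpos⟩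
      rw [show d - 1 - m' + m' = d - 1 by omega] at h3
      rwa [← pow_mul] at h3
    refine ⟨d - s + s * (d - 1), ?_, ?_⟩
    · have e1 : s * (d - 1) = s * (d - 2) + s := by
        rw [show d - 1 = (d - 2) + 1 by omega, Nat.mul_add, Nat.mul_one]
      have e2 : s * (d - 2) ≤ (d - 1) * (d - 2) :=
        Nat.mul_le_mul_right _ hsd1
      have e3 : (d - 1) * (d - 2) + 3 * d = d * d + 2 := by
        obtain ⟨m, hm⟩ : ∃ m, d = m + 2 := ⟨d - 2, by omega⟩
        rw [show d - 1 = m + 1 by omega, show d - 2 = m by omega, hm]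
        ring
      have e4 : d ^ 2 = d * d := sq d
      omega
    · intro i j
      obtain ⟨u, h1, h2⟩ := hstep i
      exact (pow_add_pos_iff M (d - s) (s * (d - 1)) i j).mpr ⟨u, h1, hfinal u h2 j⟩
end

section
/- Let M = (m_{i,j}) be a matrix with strictly positive entries and let x = (x_i) be its unique right eigenvector with positive entries normalized so that ∑ x_i = 1 (the Perron eigenvector). Then for all i: min_j (m_{i,j} / ∑_k m_{k,j}) ≤ x_i ≤ max_j (m_{i,j} / ∑_k m_{k,j}). -/
/-- Lemma (Perron bounds): if `M` has strictly positive entries and `x` is its (unique)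
right eigenvector with positive entries normalized so that `∑ x i = 1`, then for every `i`,
`min_j (M i j / ∑_k M k j) ≤ x i ≤ max_j (M i j / ∑_k M k j)`. -/
theorem perron_eigenvector_bounds (d : ℕ) (hd : 0 < d)
    (M : Matrix (Fin d) (Fin d) ℝ) (hpos : ∀ i j, 0 < M i j)
    (x : Fin d → ℝ) (hx : ∀ i, 0 < x i) (hsum : ∑ i, x i = 1)
    (μ : ℝ) (heig : M.mulVec x = μ • x) :
    ∀ i, (⨅ j, M i j / ∑ k, M k j) ≤ x i ∧ x i ≤ ⨆ j, M i j / ∑ k, M k j := by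
  have i₀ : Fin d := ⟨0, hd⟩
  set S : Fin d → ℝ := fun j => ∑ k, M k j with hSdef
  have hS : ∀ j, 0 < S j := fun j =>
    Finset.sum_pos (fun k _ => hpos k j) ⟨i₀, Finset.mem_univ _⟩
  have hμx : ∀ i, μ * x i = ∑ j, M i j * x j := by
    intro i
    have := congrFun heig i
    simpa [Matrix.mulVec, dotProduct, smul_eq_mul] using this.symm
  have hμpos : 0 < μ := by
    have h1 : 0 < μ * x i₀ := by
      rw [hμx i₀]
      exact Finset.sum_pos (fun j _ => mul_pos (hpos i₀ j) (hx j))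
        ⟨i₀, Finset.mem_univ _⟩
    rcases mul_pos_iff.mp h1 with ⟨h, _⟩ | ⟨_, h⟩
    · exact h
    · exact absurd (hx i₀) (not_lt.mpr h.le)
  have hμeq : μ = ∑ j, S j * x j := by
    calc μ = μ * ∑ i, x i := by rw [hsum, mul_one]
      _ = ∑ i, μ * x i := by rw [Finset.mul_sum]
      _ = ∑ i, ∑ j, M i j * x j := by simp_rw [hμx]
      _ = ∑ j, ∑ i, M i j * x j := Finset.sum_comm
      _ = ∑ j, S j * x j := by simp [hSdef, Finset.sum_mul]
  intro i
  constructor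
  · set c : ℝ := ⨅ j, M i j / S j with hcdef
    have hc : ∀ j, c * S j ≤ M i j := by
      intro j
      have h1 : c ≤ M i j / S j :=
        ciInf_le (f := fun j => M i j / S j) (Set.Finite.bddBelow (Set.finite_range _)) j
      calc c * S j ≤ (M i j / S j) * S j :=
            mul_le_mul_of_nonneg_right h1 (hS j).le
        _ = M i j := div_mul_cancel₀ _ (hS j).ne'
    have key : μ * c ≤ μ * x i := by
      rw [hμx i]
      calc μ * c = ∑ j, (c * S j) * x j := by
            rw [hμeq, Finset.sum_mul]
            exact Finset.sum_congr rfl fun j _ => by ring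
        _ ≤ ∑ j, M i j * x j :=
            Finset.sum_le_sum fun j _ =>
              mul_le_mul_of_nonneg_right (hc j) (hx j).le
    exact (mul_le_mul_iff_right₀ hμpos).mp key
  · set c : ℝ := ⨆ j, M i j / S j with hcdef
    have hc : ∀ j, M i j ≤ c * S j := by
      intro j
      have h1 : M i j / S j ≤ c :=
        le_ciSup (f := fun j => M i j / S j) (Set.Finite.bddAbove (Set.finite_range _)) j
      calc M i j = (M i j / S j) * S j := (div_mul_cancel₀ _ (hS j).ne').symm
        _ ≤ c * S j := mul_le_mul_of_nonneg_right h1 (hS j).le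
    have key : μ * x i ≤ μ * c := by
      rw [hμx i]
      calc ∑ j, M i j * x j ≤ ∑ j, (c * S j) * x j :=
            Finset.sum_le_sum fun j _ =>
              mul_le_mul_of_nonneg_right (hc j) (hx j).le
        _ = μ * c := by
            rw [hμeq, Finset.sum_mul]
            exact Finset.sum_congr rfl fun j _ => by ring
    exact (mul_le_mul_iff_right₀ hμpos).mp key
end

section
/- Let x be a uniformly recurrent sequence over a finite alphabet and u a non-empty prefix of x. Then the set R_{x,u} of return words to u in x is a code: the induced monoid morphism Θ_{x,u} from the free monoid over R_{x,u} into A* is injective. -/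
/-- The factor of the sequence `x` starting at position `i` of length `n`. -/
def seqWord {A : Type*} (x : ℕ → A) (i n : ℕ) : List A :=
  (List.range n).map (fun k => x (i + k))

/-- The word `u` occurs in the sequence `x` at position `i`. -/
def occursAt {A : Type*} (x : ℕ → A) (u : List A) (i : ℕ) : Prop :=
  seqWord x i u.length = u

/-- `u` is a factor of the sequence `x`. -/
def IsFactor {A : Type*} (x : ℕ → A) (u : List A) : Prop :=
  ∃ i, occursAt x u i

/-- `u` is a prefix of the sequence `x`. -/
def IsPrefixSeq {A : Type*} (u : List A) (x : ℕ → A) : Prop :=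
  occursAt x u 0

/-- `x` is uniformly recurrent: every factor occurs in every sufficiently long window. -/
def UnifRec {A : Type*} (x : ℕ → A) : Prop :=
  ∀ u : List A, IsFactor x u → ∃ C, ∀ i, ∃ j, i ≤ j ∧ j < i + C ∧ occursAt x u j

/-- `w` is a return word to `u` in `x`: the factor between two consecutive occurrences of `u`. -/
def IsReturnWord {A : Type*} (x : ℕ → A) (u w : List A) : Prop :=
  ∃ i j, i < j ∧ occursAt x u i ∧ occursAt x u j ∧
    (∀ k, i < k → k < j → ¬ occursAt x u k) ∧ w = seqWord x i (j - i)

/-- Apply a morphism (given on letters) to a word, by concatenation. -/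
def morphApply {I A : Type*} (θ : I → List A) (l : List I) : List A :=
  (l.map θ).flatten

/-- Iterate an endomorphism `σ` of the free monoid `n` times on a word. -/
def morphIter {A : Type*} (σ : A → List A) : ℕ → List A → List A
  | 0, l => l
  | n + 1, l => morphApply σ (morphIter σ n l)

/-- `x` is ultimately periodic. -/
def UltPeriodic {A : Type*} (x : ℕ → A) : Prop :=
  ∃ p > 0, ∃ N, ∀ n ≥ N, x (n + p) = x n

/-- `x` is linearly recurrent with constant `K`: it is uniformly recurrent and two
successive occurrences of any nonempty factor `u` differ by at most `K * |u|`. -/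
def LinRec {A : Type*} (K : ℕ) (x : ℕ → A) : Prop :=
  UnifRec x ∧ ∀ u : List A, u ≠ [] → IsFactor x u →
    ∀ i, occursAt x u i → ∃ j, i < j ∧ j ≤ i + K * u.length ∧ occursAt x u j

/-- `σ` is prolongable on the letter `a`. -/
def Prolongable {A : Type*} (σ : A → List A) (a : A) : Prop :=
  (∃ t, σ a = a :: t ∧ t ≠ []) ∧
    Filter.Tendsto (fun n => (morphIter σ n [a]).length) Filter.atTop Filter.atTop

/-- `σ` is growing: the image of each letter has length tending to infinity. -/
def Growing {A : Type*} (σ : A → List A) : Prop :=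
  ∀ a, Filter.Tendsto (fun n => (morphIter σ n [a]).length) Filter.atTop Filter.atTop

/-- `σ` is primitive: some power sends every letter to a word containing every letter. -/
def Primitive {A : Type*} (σ : A → List A) : Prop :=
  ∃ n > 0, ∀ a b : A, b ∈ morphIter σ n [a]

/-- `x` is the fixed point `σ^∞(a)` of `σ`, prolongable on `a`. -/
def IsFixedPointOf {A : Type*} (σ : A → List A) (a : A) (x : ℕ → A) : Prop :=
  x 0 = a ∧ ∀ n, IsPrefixSeq (morphIter σ n [a]) x

/-- The word `w` belongs to the language of the endomorphism `σ`. -/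
def InLang {A : Type*} (σ : A → List A) (w : List A) : Prop :=
  ∃ a n, w <:+: morphIter σ n [a]

/-- The word `u` occurs at position `i` in the word `w`. -/
def listOccursAt {A : Type*} (w u : List A) (i : ℕ) : Prop :=
  i + u.length ≤ w.length ∧ (w.drop i).take u.length = u

/-- `|σ^k|`: the maximal length of the image of a letter under `σ^k`. -/
def maxLen {A : Type*} [Fintype A] [Nonempty A] (σ : A → List A) (k : ℕ) : ℕ :=
  Finset.univ.sup' Finset.univ_nonempty (fun a => (morphIter σ k [a]).length)

/-- `⟨σ^k⟩`: the minimal length of the image of a letter under `σ^k`. -/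
def minLen {A : Type*} [Fintype A] [Nonempty A] (σ : A → List A) (k : ℕ) : ℕ :=
  Finset.univ.inf' Finset.univ_nonempty (fun a => (morphIter σ k [a]).length)

/-- `(R, θ, z)` is the derived-sequence data of `x` on the prefix `u`: `θ 0, …, θ (R-1)`
enumerate the return words to `u` in order of first appearance in `x`, `z` is the derived
sequence, i.e. the coding of the decomposition of `x` into return words to `u`,
so that `Θ_{x,u}(z) = x`. -/
def IsDerivedSeq {A : Type*} (x : ℕ → A) (u : List A) (R : ℕ)
    (θ : ℕ → List A) (z : ℕ → ℕ) : Prop :=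
  (∀ i < R, IsReturnWord x u (θ i)) ∧
  (∀ w, IsReturnWord x u w → ∃ i < R, θ i = w) ∧
  (∀ i < R, ∀ j < R, i < j →
      sInf {k | occursAt x (θ i) k} < sInf {k | occursAt x (θ j) k}) ∧
  (∀ k, z k < R) ∧
  (∀ n, IsPrefixSeq (morphApply θ (seqWord z 0 n)) x)

lemma seqWord_length {A : Type*} (x : ℕ → A) (i n : ℕ) : (seqWord x i n).length = n := by
  simp [seqWord]

lemma seqWord_append {A : Type*} (x : ℕ → A) (i m n : ℕ) :
    seqWord x i (m + n) = seqWord x i m ++ seqWord x (i + m) n := by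
  apply List.ext_getElem
  · simp [seqWord]
  · intro k h1 h2
    simp only [seqWord, List.getElem_map, List.getElem_range, List.getElem_append,
      List.length_map, List.length_range]
    split
    · rfl
    · congr 1; omega

lemma seqWord_take {A : Type*} (x : ℕ → A) (i : ℕ) {m n : ℕ} (h : m ≤ n) :
    (seqWord x i n).take m = seqWord x i m := by
  apply List.ext_getElem
  · simp [seqWord]; omega
  · intro k h1 h2; simp [seqWord]

lemma seqWord_drop {A : Type*} (x : ℕ → A) (i k n : ℕ) :
    (seqWord x i n).drop k = seqWord x (i + k) (n - k) := by
  apply List.ext_getElem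
  · simp [seqWord]
  · intro j h1 h2
    simp only [seqWord, List.getElem_drop, List.getElem_map, List.getElem_range]
    congr 1; omega

lemma rw_ne_nil {A : Type*} {x : ℕ → A} {u w : List A} (h : IsReturnWord x u w) : w ≠ [] := by
  obtain ⟨i, j, hij, _, _, _, rfl⟩ := h
  intro hc
  have := congrArg List.length hc
  simp [seqWord_length] at this
  omega

lemma rw_prefix_u {A : Type*} {x : ℕ → A} {u w : List A} (h : IsReturnWord x u w) :
    u <+: w ++ u := by
  obtain ⟨i, j, hij, hi, hj, _, rfl⟩ := h
  rw [List.prefix_iff_eq_take]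
  have happ : seqWord x i (j - i) ++ u = seqWord x i (j - i + u.length) := by
    rw [seqWord_append]
    congr 1
    have h' : i + (j - i) = j := by omega
    rw [h']; exact hj.symm
  rw [happ, seqWord_take x i (by omega)]
  exact hi.symm

lemma morphApply_prefix_u {A I : Type*} {x : ℕ → A} {u : List A} {θ : I → List A}
    (hret : ∀ c : I, IsReturnWord x u (θ c)) (l : List I) :
    u <+: morphApply θ l ++ u := by
  induction l with
  | nil => simp [morphApply]
  | cons c t ih =>
    obtain ⟨r, hr⟩ := ih
    have : morphApply θ (c :: t) ++ u = θ c ++ (morphApply θ t ++ u) := by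
      simp [morphApply]
    rw [this, ← hr, ← List.append_assoc]
    exact (rw_prefix_u (hret c)).trans (List.prefix_append _ r)

/-- In `w ++ u` (for `w` a return word to `u`), `u` occurs only at positions `0` and `|w|`. -/
lemma rw_occ {A : Type*} {x : ℕ → A} {u w : List A} (h : IsReturnWord x u w)
    {k : ℕ} (hk : k ≤ w.length) (hocc : ((w ++ u).drop k).take u.length = u) :
    k = 0 ∨ k = w.length := by
  obtain ⟨i, j, hij, hi, hj, hbet, rfl⟩ := h
  have hwl : (seqWord x i (j - i)).length = j - i := seqWord_length x i (j - i)
  rw [hwl] at hk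
  have happ : seqWord x i (j - i) ++ u = seqWord x i (j - i + u.length) := by
    rw [seqWord_append]
    congr 1
    have h' : i + (j - i) = j := by omega
    rw [h']; exact hj.symm
  rw [happ, seqWord_drop, seqWord_take] at hocc
  · have hocc' : occursAt x u (i + k) := hocc
    by_contra hc
    push_neg at hc
    exact hbet (i + k) (by omega) (by omega) hocc'
  · omega

lemma head_return_eq {A I : Type*} {x : ℕ → A} {u : List A} (hu : u ≠ []) {θ : I → List A}
    (hret : ∀ c : I, IsReturnWord x u (θ c)) {a b : I} {s1 s2 : List A}
    (hp1 : u <+: s1 ++ u) (hp2 : u <+: s2 ++ u)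
    (heq : θ a ++ s1 = θ b ++ s2) (hle : (θ a).length ≤ (θ b).length) :
    θ a = θ b := by
  obtain ⟨r1, hr1⟩ := hp1
  obtain ⟨r2, hr2⟩ := hp2
  have hW : θ a ++ (u ++ r1) = θ b ++ (u ++ r2) := by
    rw [hr1, hr2, ← List.append_assoc, ← List.append_assoc, heq]
  set k := (θ a).length with hk
  -- u occurs at position k in θ b ++ u
  have hdrop : (θ b ++ (u ++ r2)).drop k = u ++ r1 := by
    rw [← hW, List.drop_append_of_le_length (le_refl k), List.drop_length, List.nil_append]
  have hassoc : θ b ++ (u ++ r2) = (θ b ++ u) ++ r2 := by simp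
  have hdrop' : ((θ b ++ u) ++ r2).drop k = (θ b ++ u).drop k ++ r2 := by
    rw [List.drop_append_of_le_length (by simp; omega)]
  have hocc : ((θ b ++ u).drop k).take u.length = u := by
    have h1 : ((θ b ++ u).drop k ++ r2).take u.length = u := by
      rw [← hdrop', ← hassoc, hdrop, List.take_append_of_le_length (by simp),
        List.take_length]
    rwa [List.take_append_of_le_length (by simp; omega)] at h1
  have := rw_occ (hret b) (by omega) hocc
  have hka : k ≠ 0 := by
    simpa [hk, List.length_eq_zero_iff] using rw_ne_nil (hret a)
  have hkb : k = (θ b).length := by omega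
  have : θ a = (θ a ++ s1).take k := by
    rw [List.take_append_of_le_length (le_refl k), List.take_length]
  rw [this, heq, hkb, List.take_append_of_le_length (le_refl _), List.take_length]

/-- Proposition (Durand 1998): for a uniformly recurrent sequence `x` and a non-empty
prefix `u` of `x`, the set of return words to `u` is a code, i.e. the monoid morphism
`Θ_{x,u}` induced by any (injective) enumeration `θ` of the return words to `u`
is injective on the free monoid. -/
theorem returnWords_code {A : Type*} [Fintype A] (x : ℕ → A) (hur : UnifRec x)
    (u : List A) (hu : u ≠ []) (hup : IsPrefixSeq u x)
    {I : Type*} (θ : I → List A) (hinj : Function.Injective θ)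
    (hrange : Set.range θ = {w | IsReturnWord x u w}) :
    Function.Injective (morphApply θ) := by
  have hret : ∀ c : I, IsReturnWord x u (θ c) := fun c => by
    have : θ c ∈ Set.range θ := ⟨c, rfl⟩
    rwa [hrange] at this
  intro l1 l2 h
  induction l1 generalizing l2 with
  | nil =>
    cases l2 with
    | nil => rfl
    | cons b t2 =>
      exfalso
      have h' : ([] : List A) = θ b ++ morphApply θ t2 := by simpa [morphApply] using h
      exact rw_ne_nil (hret b) (List.append_eq_nil_iff.mp h'.symm).1
  | cons a t1 ih =>
    cases l2 with
    | nil =>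
      exfalso
      have h' : θ a ++ morphApply θ t1 = ([] : List A) := by simpa [morphApply] using h
      exact rw_ne_nil (hret a) (List.append_eq_nil_iff.mp h').1
    | cons b t2 =>
      have heq : θ a ++ morphApply θ t1 = θ b ++ morphApply θ t2 := by
        simpa [morphApply] using h
      have hab : θ a = θ b := by
        rcases le_total (θ a).length (θ b).length with hle | hle
        · exact head_return_eq hu hret (morphApply_prefix_u hret t1)
            (morphApply_prefix_u hret t2) heq hle
        · exact (head_return_eq hu hret (morphApply_prefix_u hret t2)
            (morphApply_prefix_u hret t1) heq.symm hle).symm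
      have hab' : a = b := hinj hab
      have htail : morphApply θ t1 = morphApply θ t2 := by
        rw [hab] at heq
        exact List.append_cancel_left heq
      rw [hab', ih htail]
end

section
/- Let σ be a primitive substitution on an alphabet of d letters, prolongable on the letter a. Then the maximal gap R_σ between two successive occurrences of any length-2 word of the language of σ in any word of the language is at most 2·|σ^{2d²}|. -/
namespace GapBound
variable {A : Type*}
variable {A : Type*}

theorem morphApply_nil (θ : A → List A) : morphApply θ [] = [] := rfl

theorem morphApply_cons (θ : A → List A) (b : A) (l : List A) :
    morphApply θ (b :: l) = θ b ++ morphApply θ l := by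
  simp [morphApply]

theorem morphApply_singleton (θ : A → List A) (b : A) : morphApply θ [b] = θ b := by
  simp [morphApply]

theorem morphApply_append (θ : A → List A) (l1 l2 : List A) :
    morphApply θ (l1 ++ l2) = morphApply θ l1 ++ morphApply θ l2 := by
  simp [morphApply]

theorem mem_morphApply {θ : A → List A} {l : List A} {c : A} :
    c ∈ morphApply θ l ↔ ∃ b ∈ l, c ∈ θ b := by
  simp [morphApply]

theorem morphIter_zero (σ : A → List A) (l : List A) : morphIter σ 0 l = l := rfl

theorem morphIter_succ (σ : A → List A) (n : ℕ) (l : List A) :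
    morphIter σ (n + 1) l = morphApply σ (morphIter σ n l) := rfl

theorem morphIter_nil (σ : A → List A) (n : ℕ) : morphIter σ n [] = [] := by
  induction n with
  | zero => rfl
  | succ n ih => rw [morphIter_succ, ih]; rfl

theorem morphIter_append (σ : A → List A) (n : ℕ) (l1 l2 : List A) :
    morphIter σ n (l1 ++ l2) = morphIter σ n l1 ++ morphIter σ n l2 := by
  induction n with
  | zero => rfl
  | succ n ih => rw [morphIter_succ, ih, morphApply_append]; rfl

theorem morphApply_morphIter (σ : A → List A) (n : ℕ) (l : List A) :
    morphApply σ (morphIter σ n l) = morphIter σ n (morphApply σ l) := by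
  induction n with
  | zero => rfl
  | succ n ih => rw [morphIter_succ, morphIter_succ, ih]

theorem morphIter_succ' (σ : A → List A) (n : ℕ) (l : List A) :
    morphIter σ (n + 1) l = morphIter σ n (morphApply σ l) := by
  rw [morphIter_succ, morphApply_morphIter]

theorem morphIter_add (σ : A → List A) (m n : ℕ) (l : List A) :
    morphIter σ (m + n) l = morphIter σ m (morphIter σ n l) := by
  induction m with
  | zero => rw [Nat.zero_add]; rfl
  | succ m ih => rw [Nat.succ_add, morphIter_succ, morphIter_succ, ih]

theorem infix_morphIter (σ : A → List A) (n : ℕ) {u v : List A} (h : u <:+: v) :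
    morphIter σ n u <:+: morphIter σ n v := by
  obtain ⟨s, t, rfl⟩ := h
  exact ⟨morphIter σ n s, morphIter σ n t, by rw [← morphIter_append, ← morphIter_append]⟩

theorem singleton_infix {b : A} {l : List A} (h : b ∈ l) : [b] <:+: l := by
  obtain ⟨s, t, rfl⟩ := List.append_of_mem h
  exact ⟨s, t, by simp⟩

theorem morphApply_ne_nil {σ : A → List A} (hσ : ∀ b, σ b ≠ []) {l : List A} (hl : l ≠ []) :
    morphApply σ l ≠ [] := by
  cases l with
  | nil => exact absurd rfl hl
  | cons b l => rw [morphApply_cons]; simp [hσ b]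

theorem morphIter_ne_nil {σ : A → List A} (hσ : ∀ b, σ b ≠ []) (n : ℕ) {l : List A}
    (hl : l ≠ []) : morphIter σ n l ≠ [] := by
  induction n with
  | zero => exact hl
  | succ n ih => rw [morphIter_succ]; exact morphApply_ne_nil hσ ih

theorem morphIter_eq_morphApply (σ : A → List A) (n : ℕ) (l : List A) :
    morphIter σ n l = morphApply (fun b => morphIter σ n [b]) l := by
  induction l with
  | nil => rw [morphIter_nil]; rfl
  | cons b l ih =>
      rw [show b :: l = [b] ++ l from rfl, morphIter_append, morphApply_append, ih,
        morphApply_singleton]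

theorem sigma_ne_nil {σ : A → List A} (hgrow : Growing σ) : ∀ b, σ b ≠ [] := by
  intro b hb
  have h0 : ∀ n : ℕ, morphIter σ (n + 1) [b] = [] := by
    intro n
    induction n with
    | zero => rw [morphIter_succ, morphIter_zero, morphApply_singleton, hb]
    | succ n ih => rw [morphIter_succ, ih]; rfl
  obtain ⟨n, hn1, hn⟩ := ((Filter.tendsto_atTop.mp (hgrow b) 1).and
    (Filter.eventually_ge_atTop 1)).exists
  rcases n with _ | n
  · omega
  · rw [h0 n] at hn1
    simp at hn1


theorem iter_a_prefix_mono {σ : A → List A} {a : A} (ha : ∃ t, σ a = a :: t) :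
    ∀ k l : ℕ, k ≤ l → morphIter σ k [a] <+: morphIter σ l [a] := by
  have step : ∀ k : ℕ, morphIter σ k [a] <+: morphIter σ (k + 1) [a] := by
    intro k
    obtain ⟨t, ht⟩ := ha
    rw [morphIter_succ', morphApply_singleton, ht, show a :: t = [a] ++ t from rfl,
      morphIter_append]
    exact ⟨morphIter σ k t, rfl⟩
  intro k l hkl
  induction l with
  | zero => rw [Nat.le_zero.mp hkl]
  | succ l ih =>
      rcases Nat.lt_or_ge k (l + 1) with h | h
      · exact (ih (by omega)).trans (step l)
      · rw [show k = l + 1 by omega]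

section Fin
variable [Fintype A] [Nonempty A]

theorem iter_a_full {σ : A → List A} {a : A} (hprim : Primitive σ) (ha : ∃ t, σ a = a :: t) :
    ∀ k : ℕ, Fintype.card A - 1 ≤ k → ∀ b, b ∈ morphIter σ k [a] := by
  classical
  obtain ⟨p, hp0, hp⟩ := hprim
  set S : ℕ → Finset A := fun k => (morphIter σ k [a]).toFinset with hSdef
  have hmono : ∀ k l : ℕ, k ≤ l → S k ⊆ S l := by
    intro k l hkl x hx
    rw [hSdef, List.mem_toFinset] at hx ⊢
    exact ((iter_a_prefix_mono ha k l hkl).sublist.subset) hx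
  have hSp : S p = Finset.univ := by
    apply Finset.eq_univ_iff_forall.mpr
    intro b
    rw [hSdef, List.mem_toFinset]
    exact hp a b
  have hnext : ∀ m : ℕ, S (m + 1) = (S m).biUnion (fun x => (σ x).toFinset) := by
    intro m
    ext c
    simp only [hSdef, List.mem_toFinset, morphIter_succ, mem_morphApply, Finset.mem_biUnion]
  have hstab : ∀ k : ℕ, S (k + 1) = S k → ∀ m, k ≤ m → S m = S k := by
    intro k hk m hm
    induction m with
    | zero => rw [Nat.le_zero.mp hm]
    | succ m ih =>
        rcases Nat.lt_or_ge k (m + 1) with h | h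
        · have h1 : S m = S k := ih (by omega)
          rw [hnext m, h1, ← hnext k, hk]
        · rw [show k = m + 1 by omega]
  have hgrowS : ∀ k : ℕ, S k = Finset.univ ∨ k + 1 ≤ (S k).card := by
    intro k
    induction k with
    | zero =>
        right
        have : a ∈ S 0 := by
          rw [hSdef, List.mem_toFinset]
          simp [morphIter_zero]
        exact Finset.card_pos.mpr ⟨a, this⟩
    | succ k ih =>
        rcases ih with h | h
        · left
          apply Finset.eq_univ_iff_forall.mpr
          intro b
          exact hmono k (k + 1) (by omega) (h ▸ Finset.mem_univ b)
        · by_cases hEq : S (k + 1) = S k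
          · left
            rcases Nat.le_total p k with hpk | hpk
            · apply Finset.eq_univ_iff_forall.mpr
              intro b
              exact hmono p (k + 1) (by omega) (hSp ▸ Finset.mem_univ b)
            · rw [hEq, ← hstab k hEq p hpk, hSp]
          · right
            have hss : S k ⊂ S (k + 1) :=
              ⟨hmono k (k + 1) (by omega), fun hsub => hEq (Finset.Subset.antisymm hsub (hmono k (k+1) (by omega)))⟩
            have := Finset.card_lt_card hss
            omega
  intro k hk b
  have hfull : S (Fintype.card A - 1) = Finset.univ := by
    rcases hgrowS (Fintype.card A - 1) with h | h
    · exact h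
    · apply Finset.eq_univ_of_card
      have h1 : (S (Fintype.card A - 1)).card ≤ Fintype.card A := Finset.card_le_univ _
      have h2 : 1 ≤ Fintype.card A := Fintype.card_pos
      omega
  have : b ∈ S k := hmono _ k hk (hfull ▸ Finset.mem_univ b)
  rwa [hSdef, List.mem_toFinset] at this

theorem exists_reach {σ : A → List A} {a : A} (hprim : Primitive σ) (b : A) :
    ∃ r ≤ Fintype.card A - 1, a ∈ morphIter σ r [b] := by
  classical
  obtain ⟨p, hp0, hp⟩ := hprim
  set U : ℕ → Finset A :=
    fun k => (Finset.range (k + 1)).biUnion (fun m => (morphIter σ m [b]).toFinset) with hUdef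
  have hmemU : ∀ k m : ℕ, m ≤ k → ∀ x, x ∈ morphIter σ m [b] → x ∈ U k := by
    intro k m hm x hx
    rw [hUdef]
    exact Finset.mem_biUnion.mpr ⟨m, Finset.mem_range.mpr (by omega), List.mem_toFinset.mpr hx⟩
  have hmonoU : ∀ k l : ℕ, k ≤ l → U k ⊆ U l := by
    intro k l hkl
    exact Finset.biUnion_subset_biUnion_of_subset_left _
      (Finset.range_subset_range.mpr (by omega))
  have hstabU : ∀ k : ℕ, U (k + 1) = U k → ∀ m : ℕ, ∀ x, x ∈ morphIter σ m [b] → x ∈ U k := by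
    intro k hk m
    induction m with
    | zero => exact fun x hx => hmemU k 0 (by omega) x hx
    | succ m ih =>
        intro x hx
        rw [morphIter_succ] at hx
        obtain ⟨y, hy, hxy⟩ := mem_morphApply.mp hx
        have hyU : y ∈ U k := ih y hy
        rw [hUdef] at hyU
        obtain ⟨m', hm', hy'⟩ := Finset.mem_biUnion.mp hyU
        rw [List.mem_toFinset] at hy'
        have : x ∈ morphIter σ (m' + 1) [b] := by
          rw [morphIter_succ]
          exact mem_morphApply.mpr ⟨y, hy', hxy⟩
        rw [← hk]
        exact hmemU (k + 1) (m' + 1) (by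
          have := Finset.mem_range.mp hm'
          omega) x this
  have hgrowU : ∀ k : ℕ, a ∈ U k ∨ k + 1 ≤ (U k).card := by
    intro k
    induction k with
    | zero =>
        right
        have : b ∈ U 0 := hmemU 0 0 (le_refl _) b (by simp [morphIter_zero])
        exact Finset.card_pos.mpr ⟨b, this⟩
    | succ k ih =>
        rcases ih with h | h
        · left; exact hmonoU k (k + 1) (by omega) h
        · by_cases hEq : U (k + 1) = U k
          · left
            have : a ∈ U k := hstabU k hEq p a (hp b a)
            exact hmonoU k (k + 1) (by omega) this
          · right
            have hss : U k ⊂ U (k + 1) :=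
              ⟨hmonoU k (k + 1) (by omega), fun hsub =>
                hEq (Finset.Subset.antisymm hsub (hmonoU k (k + 1) (by omega)))⟩
            have := Finset.card_lt_card hss
            omega
  have haU : a ∈ U (Fintype.card A - 1) := by
    rcases hgrowU (Fintype.card A - 1) with h | h
    · exact h
    · have h1 : (U (Fintype.card A - 1)).card ≤ Fintype.card A := Finset.card_le_univ _
      have h2 : 1 ≤ Fintype.card A := Fintype.card_pos
      have : U (Fintype.card A - 1) = Finset.univ := Finset.eq_univ_of_card _ (by omega)
      rw [this]; exact Finset.mem_univ a
  rw [hUdef] at haU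
  obtain ⟨m, hm, hma⟩ := Finset.mem_biUnion.mp haU
  exact ⟨m, by have := Finset.mem_range.mp hm; omega, List.mem_toFinset.mp hma⟩

theorem mem_iter_all {σ : A → List A} {a : A} (hprim : Primitive σ) (ha : ∃ t, σ a = a :: t)
    {s : ℕ} (hs : 2 * Fintype.card A - 2 ≤ s) (b c : A) : c ∈ morphIter σ s [b] := by
  obtain ⟨r, hr, hra⟩ := exists_reach (a := a) hprim b
  have hd : 1 ≤ Fintype.card A := Fintype.card_pos
  have h1 : morphIter σ (s - r) [a] <:+: morphIter σ s [b] := by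
    have h2 := infix_morphIter σ (s - r) (singleton_infix hra)
    rwa [← morphIter_add, show s - r + r = s by omega] at h2
  have h3 : c ∈ morphIter σ (s - r) [a] :=
    iter_a_full hprim ha (s - r) (by omega) c
  exact h1.sublist.subset h3

end Fin

theorem infix_append_split {u X Y : List A} (h : u <:+: X ++ Y) :
    u <:+: X ∨ u <:+: Y ∨
      ∃ x y, x ≠ [] ∧ y ≠ [] ∧ u = x ++ y ∧ x <:+ X ∧ y <+: Y := by
  obtain ⟨s, t, hst⟩ := h
  rw [List.append_assoc] at hst
  rcases List.append_eq_append_iff.mp hst with ⟨a', ha1, ha2⟩ | ⟨c', _, hc2⟩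
  · rcases List.append_eq_append_iff.mp ha2 with ⟨w, hw1, hw2⟩ | ⟨w, hw1, hw2⟩
    · left
      exact ⟨s, w, by rw [ha1, hw1, List.append_assoc]⟩
    · by_cases hA : a' = []
      · right; left
        refine ⟨[], t, ?_⟩
        rw [hw2, hw1, hA]
        simp
      · by_cases hW : w = []
        · left
          refine ⟨s, [], ?_⟩
          rw [ha1, hw1, hW]
          simp
        · right; right
          exact ⟨a', w, hA, hW, hw1, ⟨s, ha1.symm⟩, ⟨t, hw2.symm⟩⟩
  · right; left
    exact ⟨c', t, by rw [hc2, List.append_assoc]⟩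

theorem descent {σ : A → List A} (hσ : ∀ b, σ b ≠ []) {u : List A} :
    ∀ {v : List A}, v ≠ [] → u ≠ [] → u.length ≤ 2 → u <:+: morphApply σ v →
      ∃ z, z <:+: v ∧ z ≠ [] ∧ z.length ≤ 2 ∧ u <:+: morphApply σ z := by
  intro v
  induction v with
  | nil => intro hv; exact absurd rfl hv
  | cons b v' ih =>
      intro _ hu0 hu2 h
      rw [morphApply_cons] at h
      rcases infix_append_split h with h1 | h1 | ⟨x, y, hx0, hy0, hxy, hxs, hyp⟩
      · refine ⟨[b], List.IsPrefix.isInfix ⟨v', rfl⟩, by simp, by simp, ?_⟩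
        rwa [morphApply_singleton]
      · have hv' : v' ≠ [] := by
          rintro rfl
          rw [morphApply_nil] at h1
          exact hu0 (List.eq_nil_of_sublist_nil h1.sublist)
        obtain ⟨z, hz1, hz2, hz3, hz4⟩ := ih hv' hu0 hu2 h1
        exact ⟨z, hz1.trans (List.IsSuffix.isInfix ⟨[b], rfl⟩), hz2, hz3, hz4⟩
      · -- x, y both length 1
        have hxl : 1 ≤ x.length := List.length_pos_iff.mpr hx0
        have hyl : 1 ≤ y.length := List.length_pos_iff.mpr hy0
        have hlen : x.length + y.length ≤ 2 := by
          rw [← List.length_append, ← hxy]; exact hu2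
        have hx1 : x.length = 1 := by omega
        have hy1 : y.length = 1 := by omega
        cases v' with
        | nil =>
            rw [morphApply_nil] at hyp
            exact absurd (List.eq_nil_of_sublist_nil hyp.sublist) hy0
        | cons b2 v'' =>
            rw [morphApply_cons] at hyp
            have hyb2 : y <+: σ b2 := by
              have h1 : y = (σ b2 ++ morphApply σ v'').take 1 := by
                rw [← hy1]; exact List.prefix_iff_eq_take.mp hyp
              have h2 : 1 ≤ (σ b2).length := List.length_pos_iff.mpr (hσ b2)
              rw [List.take_append_of_le_length h2] at h1
              rw [h1]
              exact List.take_prefix 1 (σ b2)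
            refine ⟨[b, b2], List.IsPrefix.isInfix ⟨v'', rfl⟩, by simp, by simp, ?_⟩
            obtain ⟨sx, hsx⟩ := hxs
            obtain ⟨ty, hty⟩ := hyb2
            rw [morphApply_cons, morphApply_singleton, hxy]
            exact ⟨sx, ty, by rw [← hsx, ← hty]; simp⟩

theorem shape2 {z : List A} (h0 : z ≠ []) (h2 : z.length ≤ 2) :
    (∃ x, z = [x]) ∨ (∃ x y, z = [x, y]) := by
  rcases z with _ | ⟨x, _ | ⟨y, _ | ⟨w, t⟩⟩⟩
  · exact absurd rfl h0
  · exact Or.inl ⟨x, rfl⟩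
  · exact Or.inr ⟨x, y, rfl⟩
  · simp at h2

theorem decode_eq [Inhabited A] {z1 z2 : List A} (h10 : z1 ≠ []) (h12 : z1.length ≤ 2)
    (h20 : z2 ≠ []) (h22 : z2.length ≤ 2)
    (hh : z1.headI = z2.headI) (ht : z1.tail.head? = z2.tail.head?) : z1 = z2 := by
  rcases shape2 h10 h12 with ⟨x, rfl⟩ | ⟨x, y, rfl⟩ <;>
    rcases shape2 h20 h22 with ⟨x', rfl⟩ | ⟨x', y', rfl⟩ <;> simp_all

theorem exists_small_depth [Fintype A] [Nonempty A] {σ : A → List A}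
    (hσ : ∀ b, σ b ≠ []) {u : List A} (hu2 : u.length = 2) (hu : InLang σ u) :
    ∃ n c, n + 1 ≤ Fintype.card A ^ 2 + Fintype.card A ∧ u <:+: morphIter σ n [c] := by
  classical
  letI : Inhabited A := ⟨Classical.arbitrary A⟩
  have hex : ∃ n : ℕ, ∃ c : A, u <:+: morphIter σ n [c] := by
    obtain ⟨c, n, h⟩ := hu
    exact ⟨n, c, h⟩
  obtain ⟨c, hc⟩ := Nat.find_spec hex
  set n0 := Nat.find hex with hn0def
  refine ⟨n0, c, ?_, hc⟩
  by_contra hbig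
  push_neg at hbig
  have hu0 : u ≠ [] := by intro h; rw [h] at hu2; simp at hu2
  have chain : ∀ m : ℕ, m ≤ n0 → ∃ z : List A, z ≠ [] ∧ z.length ≤ 2 ∧
      z <:+: morphIter σ (n0 - m) [c] ∧ u <:+: morphIter σ m z := by
    intro m
    induction m with
    | zero =>
        intro _
        exact ⟨u, hu0, le_of_eq hu2, by simpa using hc, List.infix_refl u⟩
    | succ m ih =>
        intro hm
        obtain ⟨z, hz0, hz2, hzc, hzu⟩ := ih (by omega)
        rw [show n0 - m = (n0 - (m + 1)) + 1 by omega, morphIter_succ'] at hzc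
        have hvne : morphApply σ [c] ≠ [] := by
          rw [morphApply_singleton]; exact hσ c
        have hvne2 : morphIter σ (n0 - (m+1)) (morphApply σ [c]) ≠ [] :=
          morphIter_ne_nil hσ _ hvne
        rw [← morphIter_succ'] at hzc
        -- z <:+: morphIter σ ((n0 - (m+1)) + 1) [c] = morphApply σ (morphIter σ (n0-(m+1)) [c])
        rw [morphIter_succ] at hzc
        have hwne : morphIter σ (n0 - (m + 1)) [c] ≠ [] :=
          morphIter_ne_nil hσ _ (by simp)
        obtain ⟨z', hz'1, hz'2, hz'3, hz'4⟩ := descent hσ hwne hz0 hz2 hzc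
        refine ⟨z', hz'2, hz'3, hz'1, ?_⟩
        have h5 := infix_morphIter σ m hz'4
        rw [← morphIter_succ'] at h5
        exact hzu.trans h5
  choose z hz0 hz2 hzc hzu using chain
  have key : ∀ m1 m2 : Fin (n0 + 1), (m1 : ℕ) < (m2 : ℕ) →
      z m1 (Nat.lt_succ_iff.mp m1.isLt) = z m2 (Nat.lt_succ_iff.mp m2.isLt) → False := by
    intro m1 m2 hlt heq
    have h1 : u <:+: morphIter σ (m1 : ℕ) (z m1 (Nat.lt_succ_iff.mp m1.isLt)) :=
      hzu m1 _
    have h2 : z m2 (Nat.lt_succ_iff.mp m2.isLt) <:+: morphIter σ (n0 - (m2 : ℕ)) [c] :=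
      hzc m2 _
    rw [heq] at h1
    have h3 : u <:+: morphIter σ ((m1 : ℕ) + (n0 - (m2 : ℕ))) [c] := by
      rw [morphIter_add]
      exact h1.trans (infix_morphIter σ _ h2)
    have hm2 : (m2 : ℕ) ≤ n0 := Nat.lt_succ_iff.mp m2.isLt
    have hlt2 : (m1 : ℕ) + (n0 - (m2 : ℕ)) < n0 := by omega
    exact Nat.find_min hex hlt2 ⟨c, h3⟩
  set f : Fin (n0 + 1) → A × Option A :=
    fun m => ((z m (Nat.lt_succ_iff.mp m.isLt)).headI,
      (z m (Nat.lt_succ_iff.mp m.isLt)).tail.head?) with hfdef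
  have hcard : Fintype.card (A × Option A) < Fintype.card (Fin (n0 + 1)) := by
    rw [Fintype.card_prod, Fintype.card_option, Fintype.card_fin]
    have : Fintype.card A * (Fintype.card A + 1) = Fintype.card A ^ 2 + Fintype.card A := by
      ring
    omega
  obtain ⟨m1, m2, hne, hfe⟩ := Fintype.exists_ne_map_eq_of_card_lt f hcard
  have hdec : ∀ m1 m2 : Fin (n0 + 1), f m1 = f m2 →
      z m1 (Nat.lt_succ_iff.mp m1.isLt) = z m2 (Nat.lt_succ_iff.mp m2.isLt) := by
    intro m1 m2 h
    rw [hfdef] at h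
    simp only [Prod.mk.injEq] at h
    exact decode_eq (hz0 m1 _) (hz2 m1 _) (hz0 m2 _) (hz2 m2 _) h.1 h.2
  rcases Ne.lt_or_gt (fun h : (m1 : ℕ) = (m2 : ℕ) => hne (Fin.ext h)) with h | h
  · exact key m1 m2 h (hdec m1 m2 hfe)
  · exact key m2 m1 h (hdec m2 m1 hfe.symm)

theorem inLang_two_infix_iter [Fintype A] [Nonempty A] {σ : A → List A} {a : A}
    (hprim : Primitive σ) (hσ : ∀ b, σ b ≠ []) (ha : ∃ t, σ a = a :: t)
    {u : List A} (hu2 : u.length = 2) (hu : InLang σ u) (b : A) :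
    u <:+: morphIter σ (2 * Fintype.card A ^ 2) [b] := by
  obtain ⟨n, c, hn, hc⟩ := exists_small_depth hσ hu2 hu
  have hd : 1 ≤ Fintype.card A := Fintype.card_pos
  set d := Fintype.card A with hddef
  have hdd : d ^ 2 = d * d := sq d
  have h3 : 3 * d ≤ d * d + 3 := by
    by_cases hd3 : 3 ≤ d
    · have : 3 * d ≤ d * d := Nat.mul_le_mul_right d hd3
      omega
    · interval_cases d <;> omega
  have hn' : n + 1 ≤ d * d + d := by rw [hdd] at hn; exact hn
  have hsge : 2 * d - 2 ≤ 2 * d ^ 2 - n := by rw [hdd]; omega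
  have hns : n + (2 * d ^ 2 - n) = 2 * d ^ 2 := by rw [hdd]; omega
  have hmem : c ∈ morphIter σ (2 * d ^ 2 - n) [b] :=
    mem_iter_all hprim ha hsge b c
  have h4 := infix_morphIter σ n (singleton_infix hmem)
  rw [← morphIter_add, hns] at h4
  exact hc.trans h4

theorem block_capture {G : A → List A} {L : ℕ} (hG1 : ∀ b, G b ≠ [])
    (hGL : ∀ b, (G b).length ≤ L) (hL : 1 ≤ L) :
    ∀ (y : List A) (P : ℕ), P + 2 * L ≤ (morphApply G y).length →
      ∃ b q, b ∈ y ∧ P ≤ q ∧ q + (G b).length ≤ P + 2 * L ∧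
        ((morphApply G y).drop q).take (G b).length = G b := by
  intro y
  induction y with
  | nil =>
      intro P hP
      rw [morphApply_nil] at hP
      simp at hP
      omega
  | cons b0 y' ih =>
      intro P hP
      rw [morphApply_cons, List.length_append] at hP
      by_cases hc : (G b0).length ≤ P
      · obtain ⟨b, q, hb, h1, h2, h3⟩ := ih (P - (G b0).length) (by omega)
        refine ⟨b, (G b0).length + q, List.mem_cons_of_mem b0 hb, by omega, by omega, ?_⟩
        rw [morphApply_cons, List.drop_length_add_append]
        exact h3
      · cases y' with
        | nil =>
            rw [morphApply_nil, List.length_nil] at hP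
            have := hGL b0
            omega
        | cons b1 y'' =>
            refine ⟨b1, (G b0).length, List.mem_cons_of_mem b0 (List.mem_cons_self (a := b1) (l := y'')),
              by omega, ?_, ?_⟩
            · have := hGL b0
              have := hGL b1
              omega
            · rw [morphApply_cons, List.drop_left, morphApply_cons, List.take_left]

theorem pred_letter {σ : A → List A} (hprim : Primitive σ) (c : A) : ∃ c', c ∈ σ c' := by
  obtain ⟨p, hp0, hp⟩ := hprim
  have h1 : c ∈ morphIter σ p [c] := hp c c
  rcases p with _ | k
  · omega
  · rw [morphIter_succ] at h1
    obtain ⟨b, hb, hcb⟩ := mem_morphApply.mp h1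
    exact ⟨b, hcb⟩

theorem infix_extend {σ : A → List A} (hprim : Primitive σ) {w : List A} {n : ℕ} {c : A}
    (h : w <:+: morphIter σ n [c]) (k : ℕ) : ∃ c', w <:+: morphIter σ (n + k) [c'] := by
  induction k with
  | zero => exact ⟨c, h⟩
  | succ k ih =>
      obtain ⟨c', h'⟩ := ih
      obtain ⟨c'', hc''⟩ := pred_letter hprim c'
      refine ⟨c'', ?_⟩
      have h1 := infix_morphIter σ (n + k) (singleton_infix hc'')
      rw [← morphApply_singleton σ c'', ← morphIter_succ'] at h1
      exact h'.trans h1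
end GapBound

/-- Lemma: if `σ` is a primitive substitution on an alphabet of `d` letters, prolongable
on `a`, then the maximal gap `R_σ` between two successive occurrences of any length-2 word
of the language of `σ` in any word of the language is at most `2·|σ^{2d²}|`. -/
theorem gap_bound_length_two {A : Type*} [Fintype A] [Nonempty A]
    (σ : A → List A) (a : A)
    (hprim : Primitive σ) (hgrow : Growing σ) (hprol : Prolongable σ a) :
    ∀ w u : List A, InLang σ w → InLang σ u → u.length = 2 →
      ∀ i j, listOccursAt w u i → listOccursAt w u j → i < j →
        (∀ k, i < k → k < j → ¬ listOccursAt w u k) →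
        j - i ≤ 2 * maxLen σ (2 * (Fintype.card A) ^ 2) := by
  intro w u hw hu hu2 i j hi hj hij hno
  have hσ : ∀ b, σ b ≠ [] := GapBound.sigma_ne_nil hgrow
  have ha : ∃ t, σ a = a :: t := ⟨hprol.1.choose, hprol.1.choose_spec.1⟩
  set N := 2 * (Fintype.card A) ^ 2 with hNdef
  set L := maxLen σ N with hLdef
  have hGL : ∀ b, (morphIter σ N [b]).length ≤ L := fun b =>
    Finset.le_sup' (fun a => (morphIter σ N [a]).length) (Finset.mem_univ b)
  have hG1 : ∀ b, morphIter σ N [b] ≠ [] := fun b =>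
    GapBound.morphIter_ne_nil hσ N (by simp)
  have hL : 1 ≤ L := by
    have h2 : 1 ≤ (morphIter σ N [Classical.arbitrary A]).length :=
      List.length_pos_iff.mpr (hG1 _)
    have := hGL (Classical.arbitrary A)
    omega
  by_contra hcon
  push_neg at hcon
  obtain ⟨hilen, hiocc⟩ := hi
  obtain ⟨hjlen, hjocc⟩ := hj
  rw [hu2] at hilen hjlen
  obtain ⟨c0, n, hw0⟩ := hw
  obtain ⟨c, hwc⟩ := GapBound.infix_extend hprim hw0 N
  set M := n + N with hMdef
  set X := morphIter σ M [c] with hXdef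
  set y := morphIter σ n [c] with hydef
  have hdecomp : X = morphApply (fun b => morphIter σ N [b]) y := by
    rw [hXdef, show M = N + n by omega, GapBound.morphIter_add,
      GapBound.morphIter_eq_morphApply]
  obtain ⟨s, t, hst⟩ := hwc
  set o := s.length with hodef
  have hXlen : X.length = o + (w.length + t.length) := by
    rw [← hst]
    simp [hodef]
  set P := o + i + 1 with hPdef
  have hij2 : i + 2 * L + 1 ≤ j := by omega
  have hPbound : P + 2 * L ≤ (morphApply (fun b => morphIter σ N [b]) y).length := by
    rw [← hdecomp, hXlen]
    omega
  obtain ⟨b, q, hb, hq1, hq2, hocc⟩ :=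
    GapBound.block_capture hG1 hGL hL y P hPbound
  have huin : u <:+: morphIter σ N [b] :=
    GapBound.inLang_two_infix_iter hprim hσ ha hu2 hu b
  obtain ⟨s2, t2, hs2⟩ := huin
  set k := q + s2.length - o with hkdef
  have hoq : o + i + 1 ≤ q := hq1
  have hGblen : (morphIter σ N [b]).length = s2.length + (u.length + t2.length) := by
    rw [← hs2]
    simp
  have hbound2 : q + s2.length + 2 ≤ o + j := by
    have h1 : q + (morphIter σ N [b]).length ≤ P + 2 * L := hq2
    rw [hGblen, hu2] at h1
    omega
  -- the occurrence equality, block side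
  have hocc' : (X.drop q).take (morphIter σ N [b]).length = morphIter σ N [b] := by
    rw [hdecomp]
    exact hocc
  have hE2 : X.drop q = morphIter σ N [b] ++ (X.drop q).drop (morphIter σ N [b]).length := by
    conv_lhs => rw [← List.take_append_drop (morphIter σ N [b]).length (X.drop q)]
    rw [hocc']
  have hA : (X.drop (q + s2.length)).take 2 = u := by
    rw [← List.drop_drop, hE2, ← hs2, List.append_assoc, List.append_assoc,
      List.drop_left, ← List.append_assoc]
    rw [List.append_assoc, ← hu2, List.take_left]
  -- the occurrence equality, w side
  have hkw : k + 2 ≤ w.length := by omega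
  have hok : o + k = q + s2.length := by omega
  have hB : (X.drop (q + s2.length)).take 2 = (w.drop k).take 2 := by
    rw [← hok, ← hst, List.append_assoc, List.drop_length_add_append,
      List.drop_append_of_le_length (by omega : k ≤ w.length),
      List.take_append_of_le_length (by rw [List.length_drop]; omega)]
  have hoccw : listOccursAt w u k := by
    constructor
    · rw [hu2]; omega
    · rw [hu2, ← hB, hA]
  exact hno k (by omega) (by omega) hoccw
end

section
/- Let x be a non-periodic linearly recurrent sequence with constant K and u a factor of x. Then every return word v to u in x satisfies |u|/K ≤ |v| ≤ K·|u|. -/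
section Aux
variable {A : Type*}

lemma sw_length (x : ℕ → A) (i n : ℕ) : (seqWord x i n).length = n := by
  simp [seqWord]

lemma sw_getElem (x : ℕ → A) (i n t : ℕ) (ht : t < n) :
    (seqWord x i n)[t]'(by simpa [seqWord] using ht) = x (i + t) := by
  simp [seqWord]

lemma sw_ext {x : ℕ → A} (a b n : ℕ) (h : ∀ t < n, x (a + t) = x (b + t)) :
    seqWord x a n = seqWord x b n := by
  apply List.ext_getElem (by simp [seqWord])
  intro t h1 h2
  have ht : t < n := by simpa [seqWord] using h1
  simpa [seqWord] using h t ht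

lemma occ_pointwise {x : ℕ → A} {u : List A} {a b : ℕ}
    (ha : occursAt x u a) (hb : occursAt x u b) :
    ∀ t < u.length, x (a + t) = x (b + t) := by
  intro t ht
  have hab : seqWord x a u.length = seqWord x b u.length := ha.trans hb.symm
  have h1 := sw_getElem x a u.length t ht
  have h2 := sw_getElem x b u.length t ht
  have h3 := List.getElem_of_eq hab (by simpa [seqWord] using ht)
  rw [h3] at h1
  exact h1.symm.trans h2

lemma occursAt_seqWord (x : ℕ → A) (a n : ℕ) : occursAt x (seqWord x a n) a := by
  show seqWord x a (seqWord x a n).length = seqWord x a n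
  rw [sw_length]

lemma sw_back (x : ℕ → A) (a n : ℕ) :
    seqWord x a (n + 1) = seqWord x a n ++ [x (a + n)] := by
  simp [seqWord, List.range_succ]

lemma sw_front (x : ℕ → A) (a n : ℕ) :
    seqWord x a (n + 1) = x a :: seqWord x (a + 1) n := by
  simp only [seqWord, List.range_succ_eq_map, List.map_cons, List.map_map, Nat.add_zero]
  refine congrArg₂ List.cons rfl ?_
  refine List.map_congr_left (fun k _ => ?_)
  simp only [Function.comp_apply]
  congr 1
  omega

lemma perm_step {x : ℕ → A} {g : ℕ} (hg : 0 < g) (a : ℕ) (hx : x (a + g) = x a) :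
    (seqWord x a g).Perm (seqWord x (a + 1) g) := by
  obtain ⟨gp, rfl⟩ : ∃ gp, g = gp + 1 := ⟨g - 1, by omega⟩
  rw [sw_front, sw_back]
  have hx2 : x (a + 1 + gp) = x a := by
    rw [show a + 1 + gp = a + (gp + 1) by omega]; exact hx
  rw [hx2]
  exact (List.perm_append_singleton _ _).symm

lemma perm_const {x : ℕ → A} {g : ℕ} (hg : 0 < g) :
    ∀ (d a : ℕ), (∀ k, k < d → x (a + k + g) = x (a + k)) →
      (seqWord x a g).Perm (seqWord x (a + d) g) := by
  intro d
  induction d with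
  | zero => intro a _; rw [Nat.add_zero]
  | succ d ih =>
    intro a h
    have h1 := ih a (fun k hk => h k (by omega))
    have h2 := perm_step hg (a + d) (h d (by omega))
    have h3 := h1.trans h2
    rwa [show a + d + 1 = a + (d + 1) by omega] at h3

end Aux


/-- Theorem (Durand–Host–Skau): if `x` is a non-periodic linearly recurrent sequence with
constant `K` and `u` a (non-empty) factor of `x`, then every return word `v` to `u`
satisfies `|u|/K ≤ |v| ≤ K·|u|` (the left inequality stated as `|u| ≤ K·|v|`). -/
theorem returnWord_length_bounds {A : Type*} [Fintype A] (x : ℕ → A)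
    (K : ℕ) (hlr : LinRec K x) (hnp : ¬ UltPeriodic x)
    (u : List A) (hu : u ≠ []) (huf : IsFactor x u) :
    ∀ v, IsReturnWord x u v → u.length ≤ K * v.length ∧ v.length ≤ K * u.length := by
  classical
  intro v hv
  obtain ⟨i, j, hij, occi, occj, hmid, hveq⟩ := hv
  have hvlen : v.length = j - i := by rw [hveq, sw_length]
  obtain ⟨j', hij', hj'le, occj'⟩ := hlr.2 u hu huf i occi
  have hjj' : j ≤ j' := by
    by_contra hcon
    push_neg at hcon
    exact hmid j' hij' hcon occj'
  have hupper : v.length ≤ K * u.length := by omega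
  refine ⟨?_, hupper⟩
  by_contra hlow
  push_neg at hlow
  rw [hvlen] at hlow
  set g := j - i with hgdef
  have hgpos : 0 < g := by omega
  have hKpos : 0 < K := by
    by_contra hK0
    push_neg at hK0
    have : K = 0 := by omega
    rw [this] at hj'le
    omega
  have hglt : g < u.length := by
    have := Nat.le_mul_of_pos_left g hKpos
    omega
  have occig : occursAt x u (i + g) := by
    rwa [show i + g = j by omega]
  have hper : ∀ t, t < u.length → x (i + t + g) = x (i + t) := by
    intro t ht
    have h := occ_pointwise occig occi t ht
    rwa [show i + g + t = i + t + g by omega] at h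
  have hEx : ∃ m, i ≤ m ∧ x (m + g) ≠ x m := by
    by_contra hno
    push_neg at hno
    exact hnp ⟨g, hgpos, i, fun n hn => hno n hn⟩
  set m := Nat.find hEx with hmdef
  obtain ⟨him, hbreak⟩ := Nat.find_spec hEx
  have hmin : ∀ k, i ≤ k → k < m → x (k + g) = x k := by
    intro k hik hkm
    by_contra hne
    exact Nat.find_min hEx hkm ⟨hik, hne⟩
  -- the long periodic word W and a far occurrence of it
  have occW : occursAt x (seqWord x i (u.length + g)) i := occursAt_seqWord x i _
  obtain ⟨C, hC⟩ := hlr.1 (seqWord x i (u.length + g)) ⟨i, occW⟩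
  obtain ⟨c, hc1, _, occWc⟩ := hC (m + 2)
  have hWpt : ∀ s, s < u.length + g → x (c + s) = x (i + s) := by
    intro s hs
    have := occ_pointwise occWc occW s (by rw [sw_length]; exact hs)
    exact this
  -- the break word Y
  have occY : occursAt x (seqWord x (m + 1) g) (m + 1) := occursAt_seqWord x (m + 1) g
  have hYlen : (seqWord x (m + 1) g).length = g := sw_length x (m + 1) g
  have hYne : (seqWord x (m + 1) g) ≠ [] := by
    intro h
    rw [h] at hYlen
    simp at hYlen
    omega
  set j₀ := Nat.findGreatest (fun k => occursAt x (seqWord x (m + 1) g) k) (c - 1) with hj₀def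
  have hj₀occ : occursAt x (seqWord x (m + 1) g) j₀ :=
    Nat.findGreatest_spec (m := m + 1) (by omega) occY
  have hj₀le : j₀ ≤ c - 1 := Nat.findGreatest_le _
  obtain ⟨j₁, hj₀j₁, hj₁le, occY₁⟩ :=
    hlr.2 (seqWord x (m + 1) g) hYne ⟨m + 1, occY⟩ j₀ hj₀occ
  rw [hYlen] at hj₁le
  have hcj₁ : c ≤ j₁ := by
    by_contra hcon
    push_neg at hcon
    exact Nat.findGreatest_is_greatest hj₀j₁ (by omega) occY₁
  have hj₁c : j₁ - c < u.length := by omega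
  -- the permutation chain
  have P1 : (seqWord x i g).Perm (seqWord x m g) := by
    have h := perm_const hgpos (m - i) i (fun k hk => hmin (i + k) (by omega) (by omega))
    rwa [show i + (m - i) = m by omega] at h
  have P2 : seqWord x i g = seqWord x c g :=
    sw_ext i c g (fun t ht => (hWpt t (by omega)).symm)
  have P3 : (seqWord x c g).Perm (seqWord x j₁ g) := by
    have hcond : ∀ k, k < j₁ - c → x (c + k + g) = x (c + k) := by
      intro k hk
      have hkL : k < u.length := by omega
      have e1 : x (c + k + g) = x (i + k + g) := by
        have h := hWpt (k + g) (by omega)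
        rwa [show c + (k + g) = c + k + g by omega,
             show i + (k + g) = i + k + g by omega] at h
      have e2 := hper k hkL
      have e3 := (hWpt k (by omega)).symm
      rw [e1, e2, e3]
    have h := perm_const hgpos (j₁ - c) c hcond
    rwa [show c + (j₁ - c) = j₁ by omega] at h
  have P4 : seqWord x j₁ g = seqWord x (m + 1) g := by
    have h : seqWord x j₁ (seqWord x (m + 1) g).length = seqWord x (m + 1) g := occY₁
    rwa [hYlen] at h
  have QQ : (seqWord x m g).Perm (seqWord x (m + 1) g) := by
    have t1 : (seqWord x m g).Perm (seqWord x c g) := by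
      rw [← P2]; exact P1.symm
    have t2 := t1.trans P3
    rwa [P4] at t2
  -- final contradiction
  obtain ⟨gp, hgp⟩ : ∃ gp, g = gp + 1 := ⟨g - 1, by omega⟩
  rw [hgp, sw_front, sw_back] at QQ
  have QQ2 := QQ.trans (List.perm_append_singleton _ _)
  have hx : x (m + 1 + gp) = x (m + g) := by
    congr 1
    omega
  rw [hx] at QQ2
  have hfin : x m = x (m + g) := by
    by_contra hne
    have h1 : (x m :: seqWord x (m + 1) gp).count (x m)
        = (seqWord x (m + 1) gp).count (x m) + 1 := List.count_cons_self
    have h2 : (x (m + g) :: seqWord x (m + 1) gp).count (x m)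
        = (seqWord x (m + 1) gp).count (x m) := List.count_cons_of_ne (Ne.symm hne)
    have h3 := QQ2.count_eq (x m)
    omega
  exact hbreak hfin.symm
end
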